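/- Let P : ℂ → ℂ be a monic polynomial of degree D ≥ 2. For every z ∈ ℂ, the sequence n ↦ D^{-n} · log⁺ |P^{∘n}(z)| converges to a nonnegative real limit G(z) (the Green's function of P), where log⁺ t = max(log t, 0). -/

import Mathlib

open Filter Topology

private lemma lp_cont : Continuous fun w : ℂ => max (Real.log (‖w‖)) 0 := by
  rw [continuous_iff_continuousAt]
  intro x
  rcases lt_or_ge (‖x‖) 1 with hx | hx
  · have hopen : IsOpen {w : ℂ | ‖w‖ < 1} :=
      isOpen_lt continuous_norm continuous_const
    have h0 : ∀ᶠ w : ℂ in 𝓝 x, (0 : ℝ) = max (Real.log (‖w‖)) 0 := by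
      filter_upwards [hopen.mem_nhds hx] with w hw
      exact (max_eq_right (Real.log_nonpos (norm_nonneg w) hw.le)).symm
    exact continuousAt_const.congr h0
  · have hx0 : ‖x‖ ≠ 0 := by positivity
    exact ((Real.continuousAt_log hx0).comp continuous_norm.continuousAt).max
      continuousAt_const

private lemma key_bound (D : ℕ) (hD : 2 ≤ D) (P : Polynomial ℂ)
    (hmonic : P.Monic) (hdeg : P.natDegree = D) :
    ∃ C : ℝ, 0 ≤ C ∧ ∀ w : ℂ,
      |max (Real.log (‖P.eval w‖)) 0
        - (D : ℝ) * max (Real.log (‖w‖)) 0| ≤ C := by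
  set S : ℝ := ∑ i ∈ Finset.range D, ‖P.coeff i‖ with hSdef
  have hS : 0 ≤ S := Finset.sum_nonneg fun i _ => norm_nonneg _
  set R : ℝ := 2 * S + 2 with hRdef
  set f : ℂ → ℝ := fun w => max (Real.log (‖P.eval w‖)) 0
      - (D : ℝ) * max (Real.log (‖w‖)) 0 with hfdef
  have hcont : Continuous f := by
    exact (lp_cont.comp (P.continuous)).sub (continuous_const.mul lp_cont)
  obtain ⟨C0, hC0⟩ := (isCompact_closedBall (0 : ℂ) R).exists_bound_of_continuousOn
    hcont.continuousOn
  have hlog2 : (0 : ℝ) ≤ Real.log 2 := Real.log_nonneg one_le_two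
  have hlogS : (0 : ℝ) ≤ Real.log (S + 1) := Real.log_nonneg (by linarith)
  refine ⟨max C0 (Real.log 2 + Real.log (S + 1)), le_max_of_le_right (by linarith), ?_⟩
  intro w
  rcases le_or_gt (‖w‖) R with hw | hw
  · have hmem : w ∈ Metric.closedBall (0 : ℂ) R := by
      rw [Metric.mem_closedBall, Complex.dist_eq, sub_zero]; exact hw
    calc |f w| = ‖f w‖ := (Real.norm_eq_abs _).symm
      _ ≤ C0 := hC0 w hmem
      _ ≤ _ := le_max_left _ _
  · -- the outside estimate
    set a : ℝ := ‖w‖ with hadef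
    have ha2 : 2 * S + 2 ≤ a := hw.le
    have ha1 : (1 : ℝ) ≤ a := by linarith
    have ha0 : (0 : ℝ) < a := by linarith
    have hQ : ‖∑ i ∈ Finset.range D, P.coeff i * w ^ i‖ ≤ S * a ^ (D - 1) := by
      calc ‖∑ i ∈ Finset.range D, P.coeff i * w ^ i‖
          ≤ ∑ i ∈ Finset.range D, ‖P.coeff i * w ^ i‖ :=
            norm_sum_le _ _
        _ ≤ ∑ i ∈ Finset.range D, ‖P.coeff i‖ * a ^ (D - 1) := by
            refine Finset.sum_le_sum fun i hi => ?_
            have hi' := Finset.mem_range.mp hi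
            rw [norm_mul, norm_pow]
            exact mul_le_mul_of_nonneg_left
              (pow_le_pow_right₀ ha1 (by omega : i ≤ D - 1)) (norm_nonneg _)
        _ = S * a ^ (D - 1) := by rw [← Finset.sum_mul]
    have heval : P.eval w = (∑ i ∈ Finset.range D, P.coeff i * w ^ i) + w ^ D := by
      conv_lhs => rw [Polynomial.eval_eq_sum_range]
      rw [hdeg, Finset.sum_range_succ]
      have hc : P.coeff D = 1 := by rw [← hdeg]; exact hmonic.coeff_natDegree
      rw [hc, one_mul]
    have hpow : a ^ D = a ^ (D - 1) * a := by
      rw [← pow_succ]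
      congr 1
      omega
    have hpn : (0 : ℝ) ≤ a ^ (D - 1) := by positivity
    have hlow : a ^ D / 2 ≤ ‖P.eval w‖ := by
      have h1 : a ^ D ≤ ‖P.eval w‖ + S * a ^ (D - 1) := by
        have hwD : P.eval w + -(∑ i ∈ Finset.range D, P.coeff i * w ^ i) = w ^ D := by
          rw [heval]; ring
        have h := norm_add_le (P.eval w)
          (-(∑ i ∈ Finset.range D, P.coeff i * w ^ i))
        rw [hwD, norm_pow, norm_neg] at h
        linarith [hQ]
      nlinarith [hpn, ha2, hS]
    have hone : (1 : ℝ) ≤ a ^ D / 2 := by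
      have : a ≤ a ^ D := le_self_pow₀ ha1 (by omega)
      linarith
    have hup : ‖P.eval w‖ ≤ (S + 1) * a ^ D := by
      have h1 : ‖P.eval w‖ ≤ S * a ^ (D - 1) + a ^ D := by
        rw [heval]
        calc ‖_‖ ≤ ‖∑ i ∈ Finset.range D, P.coeff i * w ^ i‖
              + ‖w ^ D‖ := norm_add_le _ _
          _ ≤ S * a ^ (D - 1) + a ^ D := by rw [norm_pow]; linarith [hQ]
      have h2 : a ^ (D - 1) ≤ a ^ D :=
        pow_le_pow_right₀ ha1 (by omega)
      nlinarith [hS]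
    have hPe1 : (1 : ℝ) ≤ ‖P.eval w‖ := le_trans hone hlow
    have hlpP : max (Real.log (‖P.eval w‖)) 0 = Real.log (‖P.eval w‖) :=
      max_eq_left (Real.log_nonneg hPe1)
    have hlpw : max (Real.log a) 0 = Real.log a := max_eq_left (Real.log_nonneg ha1)
    have haD : (0 : ℝ) < a ^ D := by positivity
    have hlog_low : (D : ℝ) * Real.log a - Real.log 2 ≤ Real.log (‖P.eval w‖) := by
      have := Real.log_le_log (by linarith : (0:ℝ) < a ^ D / 2) hlow
      rwa [Real.log_div (ne_of_gt haD) two_ne_zero, Real.log_pow] at this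
    have hlog_up : Real.log (‖P.eval w‖) ≤ Real.log (S + 1) + (D : ℝ) * Real.log a := by
      have := Real.log_le_log (by linarith : (0:ℝ) < ‖P.eval w‖) hup
      rwa [Real.log_mul (by linarith : S + 1 ≠ 0) (ne_of_gt haD), Real.log_pow] at this
    have : |f w| ≤ Real.log 2 + Real.log (S + 1) := by
      rw [hfdef]
      simp only [← hadef, hlpP, hlpw]
      rw [abs_le]
      constructor <;> linarith
    exact le_trans this (le_max_right _ _)

/-- For a monic polynomial `P` of degree `D ≥ 2`, the sequence
`n ↦ D^{-n} · log⁺ |P^{∘n}(z)|` converges to a nonnegative limit (the Green's function). -/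
theorem green_function_exists (D : ℕ) (hD : 2 ≤ D) (P : Polynomial ℂ)
    (hmonic : P.Monic) (hdeg : P.natDegree = D) (z : ℂ) :
    ∃ G : ℝ, 0 ≤ G ∧
      Tendsto (fun n : ℕ =>
          (1 / (D : ℝ) ^ n) *
            max (Real.log (‖(fun w => P.eval w)^[n] z‖)) 0)
        atTop (𝓝 G) := by
  obtain ⟨C, hC0, hC⟩ := key_bound D hD P hmonic hdeg
  set g : ℂ → ℂ := fun w => P.eval w with hgdef
  set u : ℕ → ℝ := fun n =>
    (1 / (D : ℝ) ^ n) * max (Real.log (‖g^[n] z‖)) 0 with hudef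
  have hDpos : (0 : ℝ) < (D : ℝ) := by
    have : (0 : ℕ) < D := by omega
    exact_mod_cast this
  have hDne : (D : ℝ) ≠ 0 := ne_of_gt hDpos
  have hstep : ∀ n : ℕ, dist (u n) (u (n + 1)) ≤ (C / D) * (1 / D) ^ n := by
    intro n
    set w := g^[n] z with hwdef
    have hiter : g^[n + 1] z = P.eval w := by
      rw [Function.iterate_succ_apply' g n z]
    rw [Real.dist_eq]
    have heq : u n - u (n + 1)
        = (1 / (D : ℝ) ^ (n + 1)) *
          ((D : ℝ) * max (Real.log (‖w‖)) 0
            - max (Real.log (‖P.eval w‖)) 0) := by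
      simp only [hudef, hiter, ← hwdef]
      field_simp
      ring
    rw [heq, abs_mul]
    have h1 : |1 / (D : ℝ) ^ (n + 1)| = 1 / (D : ℝ) ^ (n + 1) := by
      rw [abs_of_pos]; positivity
    rw [h1]
    have h2 : |(D : ℝ) * max (Real.log (‖w‖)) 0
        - max (Real.log (‖P.eval w‖)) 0| ≤ C := by
      rw [abs_sub_comm]; exact hC w
    calc (1 / (D : ℝ) ^ (n + 1)) * |(D : ℝ) * max (Real.log (‖w‖)) 0
          - max (Real.log (‖P.eval w‖)) 0|
        ≤ (1 / (D : ℝ) ^ (n + 1)) * C := by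
          apply mul_le_mul_of_nonneg_left h2
          positivity
      _ = (C / D) * (1 / D) ^ n := by ring
  have hr : (1 : ℝ) / D < 1 := by
    rw [div_lt_one hDpos]
    exact_mod_cast by omega
  have hcauchy : CauchySeq u := cauchySeq_of_le_geometric (1 / D) (C / D) hr hstep
  obtain ⟨G, hG⟩ := cauchySeq_tendsto_of_complete hcauchy
  refine ⟨G, ?_, hG⟩
  refine ge_of_tendsto' hG fun n => ?_
  exact mul_nonneg (by positivity) (le_max_right _ _)
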